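/- Let λ, η, χ, y₀ be real numbers with η > 0, χ < 0, and λ² ≠ 1, and set u(y) = (1−λ²)·√(−χ)·(y−y₀). Then the function μ(y) = (1/(λ²−1))·ln(√(η/(−χ))·sinh(u(y))), defined on the set of y with sinh(u(y)) > 0, satisfies on that set both (E1): μ″(y) − (1−λ²)·μ′(y)² = (1−λ²)·χ and (E2): μ′(y)² = η·exp(2(1−λ²)·μ(y)) − χ. -/

import Mathlib

/-- for η > 0, χ < 0, λ² ≠ 1 and u(y) = (1−λ²)·√(−χ)·(y−y₀),
the function μ(y) = (1/(λ²−1))·ln(√(η/(−χ))·sinh u(y)) solves both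
(E1): μ″ − (1−λ²)(μ′)² = (1−λ²)χ and (E2): (μ′)² = η·e^{2(1−λ²)μ} − χ
on the set where sinh u(y) > 0. -/
theorem stmt_13 (lam η χ y₀ : ℝ) (hη : 0 < η) (hχ : χ < 0) (hlam : lam ^ 2 ≠ 1)
    (u : ℝ → ℝ) (hu : u = fun y => (1 - lam ^ 2) * Real.sqrt (-χ) * (y - y₀))
    (μ : ℝ → ℝ)
    (hμ : μ = fun y => (1 / (lam ^ 2 - 1)) *
      Real.log (Real.sqrt (η / (-χ)) * Real.sinh (u y))) :
    ∀ y : ℝ, Real.sinh (u y) > 0 →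
      (deriv (deriv μ) y - (1 - lam ^ 2) * (deriv μ y) ^ 2 = (1 - lam ^ 2) * χ) ∧
      ((deriv μ y) ^ 2 = η * Real.exp (2 * (1 - lam ^ 2) * μ y) - χ) := by
  have hχ' : (0:ℝ) < -χ := by linarith
  set s := Real.sqrt (-χ) with hsdef
  set A := Real.sqrt (η / (-χ)) with hAdef
  have hs : 0 < s := Real.sqrt_pos.2 hχ'
  have hs2 : s ^ 2 = -χ := Real.sq_sqrt hχ'.le
  have hA : 0 < A := Real.sqrt_pos.2 (by positivity)
  have hA2 : A ^ 2 = η / (-χ) := Real.sq_sqrt (by positivity)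
  have hl : lam ^ 2 - 1 ≠ 0 := fun h => hlam (by linarith [h])
  set b := (1 - lam ^ 2) * s with hbdef
  -- derivative of μ on the open set
  have hder : ∀ z, Real.sinh (u z) > 0 →
      HasDerivAt μ (-s * Real.cosh (u z) / Real.sinh (u z)) z := by
    intro z hz
    have hu' : HasDerivAt u b z := by
      rw [hu]
      simpa using ((hasDerivAt_id z).sub_const y₀).const_mul b
    have h1 : HasDerivAt (fun w => Real.sinh (u w)) (Real.cosh (u z) * b) z :=
      (Real.hasDerivAt_sinh (u z)).comp z hu'
    have h2 : HasDerivAt (fun w => A * Real.sinh (u w))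
        (A * (Real.cosh (u z) * b)) z := h1.const_mul A
    have hpos : A * Real.sinh (u z) ≠ 0 := ne_of_gt (mul_pos hA hz)
    have h3 := (h2.log hpos).const_mul (1 / (lam ^ 2 - 1))
    have : μ = fun w => (1 / (lam ^ 2 - 1)) * Real.log (A * Real.sinh (u w)) := hμ
    rw [this]
    refine h3.congr_deriv ?_
    rw [hbdef]
    field_simp
    ring
  intro y hy
  -- openness / eventual equality
  have hopen : IsOpen {z | Real.sinh (u z) > 0} := by
    have hc : Continuous fun z => Real.sinh (u z) := by
      rw [hu]; fun_prop
    exact isOpen_lt continuous_const hc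
  have hmem : {z | Real.sinh (u z) > 0} ∈ nhds y := hopen.mem_nhds hy
  have hev : deriv μ =ᶠ[nhds y]
      (fun z => -s * Real.cosh (u z) / Real.sinh (u z)) :=
    Filter.eventually_of_mem hmem (fun z hz => (hder z hz).deriv)
  have hd1 : deriv μ y = -s * Real.cosh (u y) / Real.sinh (u y) := (hder y hy).deriv
  -- second derivative
  have hu' : HasDerivAt u b y := by
    rw [hu]
    simpa using ((hasDerivAt_id y).sub_const y₀).const_mul b
  have hcosh : HasDerivAt (fun w => Real.cosh (u w)) (Real.sinh (u y) * b) y :=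
    (Real.hasDerivAt_cosh (u y)).comp y hu'
  have hsinh : HasDerivAt (fun w => Real.sinh (u w)) (Real.cosh (u y) * b) y :=
    (Real.hasDerivAt_sinh (u y)).comp y hu'
  have hg : HasDerivAt (fun z => -s * Real.cosh (u z) / Real.sinh (u z))
      ((-s * (Real.sinh (u y) * b) * Real.sinh (u y) -
        -s * Real.cosh (u y) * (Real.cosh (u y) * b)) / Real.sinh (u y) ^ 2) y :=
    ((hcosh.const_mul (-s)).div hsinh hy.ne')
  have hd2 : deriv (deriv μ) y =
      (-s * (Real.sinh (u y) * b) * Real.sinh (u y) -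
        -s * Real.cosh (u y) * (Real.cosh (u y) * b)) / Real.sinh (u y) ^ 2 := by
    rw [hev.deriv_eq]
    exact hg.deriv
  have hid : Real.cosh (u y) ^ 2 = Real.sinh (u y) ^ 2 + 1 := by
    have := Real.cosh_sq_sub_sinh_sq (u y)
    linarith
  constructor
  · rw [hd1, hd2, hbdef]
    field_simp
    linear_combination (-Real.sinh (u y) ^ 2) * hs2
  · -- E2
    have hμy : 2 * (1 - lam ^ 2) * μ y = -(2 * Real.log (A * Real.sinh (u y))) := by
      rw [hμ]
      field_simp
      ring
    have hlog : Real.exp (2 * Real.log (A * Real.sinh (u y))) =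
        (A * Real.sinh (u y)) ^ 2 := by
      rw [show (2:ℝ) * Real.log (A * Real.sinh (u y)) =
          Real.log ((A * Real.sinh (u y)) ^ 2) by
        rw [Real.log_pow]; push_cast; ring]
      exact Real.exp_log (by positivity)
    have hexp : Real.exp (2 * (1 - lam ^ 2) * μ y) = 1 / (A * Real.sinh (u y)) ^ 2 := by
      rw [hμy, Real.exp_neg, hlog, one_div]
    rw [hd1, hexp]
    rw [mul_pow, hA2]
    field_simp
    linear_combination (Real.cosh (u y) ^ 2) * hs2 +
      (-χ) * hid
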